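/- Let K have characteristic 0 and let I = I(P_1) ∩ … ∩ I(P_n) ⊆ K[x_0, …, x_N] be the radical ideal of a finite set of distinct points P_1, …, P_n ∈ P^N. Then for every integer j ≥ 1 one has I^{(j+1)} ⊆ M · I^{(j)}. -/

import Mathlib

open MvPolynomial

noncomputable section

/-- The ideal generated by all homogeneous forms vanishing at the point with
coordinate vector `p`. -/
def homVanishingIdeal {K σ : Type*} [Field K] (p : σ → K) : Ideal (MvPolynomial σ K) :=
  Ideal.span {F : MvPolynomial σ K | (∃ d, F.IsHomogeneous d) ∧ MvPolynomial.eval p F = 0}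

/-- The `m`-th symbolic power of the radical ideal of the finite set of points
with coordinate vectors `P i`: the intersection of the `m`-th powers of the
ideals of the individual points. -/
def symbPow {K σ ι : Type*} [Field K] (P : ι → σ → K) (m : ℕ) : Ideal (MvPolynomial σ K) :=
  ⨅ i, homVanishingIdeal (P i) ^ m

/-- The irrelevant maximal ideal `M = (x_0, …, x_N)`. -/
def irrel (K σ : Type*) [Field K] : Ideal (MvPolynomial σ K) :=
  Ideal.span (Set.range (MvPolynomial.X : σ → MvPolynomial σ K))

/-- The coordinate vectors `P i` are nonzero and represent pairwise distinct
points of projective space (no two are proportional). -/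
def ProjectivelyDistinct {K σ ι : Type*} [Field K] (P : ι → σ → K) : Prop :=
  (∀ i, P i ≠ 0) ∧ Pairwise fun i j => ∀ c : K, P i ≠ c • P j

/-- `α(J)`: the least degree of a nonzero homogeneous element of `J`. -/
def idealAlpha {K σ : Type*} [Field K] (J : Ideal (MvPolynomial σ K)) : ℕ :=
  sInf {d : ℕ | ∃ F ∈ J, F ≠ 0 ∧ MvPolynomial.IsHomogeneous F d}

attribute [local instance] MvPolynomial.gradedAlgebra

/-- A derivation maps `J^(m+1)` into `J^m`. -/
lemma derivation_mem_pow {R A : Type*} [CommRing R] [CommRing A] [Algebra R A]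
    (D : Derivation R A A) (J : Ideal A) :
    ∀ m : ℕ, ∀ x ∈ J ^ (m + 1), D x ∈ J ^ m := by
  intro m
  induction m with
  | zero => intro x _; simp
  | succ m ih =>
    intro x hx
    rw [pow_succ] at hx
    refine Submodule.mul_induction_on hx (fun a ha b hb => ?_) (fun y z hy hz => ?_)
    · rw [D.leibniz, smul_eq_mul, smul_eq_mul]
      refine Ideal.add_mem _ (Ideal.mul_mem_right _ _ ha) ?_
      rw [mul_comm, pow_succ]
      exact Ideal.mul_mem_mul (ih a ha) hb
    · rw [map_add]; exact Ideal.add_mem _ hy hz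

/-- A homogeneous polynomial of degree 0 is a constant. -/
lemma eq_C_of_isHomogeneous_zero {K σ : Type*} [CommRing K] {F : MvPolynomial σ K}
    (hF : F.IsHomogeneous 0) : F = C (coeff 0 F) := by
  classical
  have h0 : F.totalDegree = 0 := (totalDegree_zero_iff_isHomogeneous σ).mpr hF
  rw [totalDegree_eq_zero_iff] at h0
  ext m
  by_cases hm : m = 0
  · simp [hm]
  · rw [coeff_C, if_neg (Ne.symm hm)]
    by_contra h
    exact hm (Finsupp.ext fun x => h0 m (mem_support_iff.mpr h) x)

lemma homVanishingIdeal_le_irrel {K σ : Type*} [Field K] (p : σ → K) :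
    homVanishingIdeal p ≤ irrel K σ := by
  rw [homVanishingIdeal, Ideal.span_le]
  rintro F ⟨⟨d, hd⟩, hev⟩
  rw [irrel, ← Set.image_univ, SetLike.mem_coe, mem_ideal_span_X_image]
  intro m hm
  by_contra h
  push_neg at h
  have hm0 : m = 0 := Finsupp.ext fun x => by simpa using h x (Set.mem_univ x)
  subst hm0
  have hd0 : d = 0 := by
    have := hd (mem_support_iff.mp hm)
    simpa [← Finsupp.degree_eq_weight_one, map_zero] using this.symm
  subst hd0
  have hC := eq_C_of_isHomogeneous_zero hd
  rw [hC, eval_C] at hev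
  rw [hC, hev, map_zero] at hm
  simp at hm

/-- Membership of `X i` in the irrelevant ideal. -/
lemma X_mem_irrel {K σ : Type*} [Field K] (i : σ) : (X i : MvPolynomial σ K) ∈ irrel K σ :=
  Ideal.subset_span ⟨i, rfl⟩

lemma homVanishingIdeal_isHomogeneous {K σ : Type*} [Field K] (p : σ → K) :
    (homVanishingIdeal p).IsHomogeneous (homogeneousSubmodule σ K) := by
  refine Ideal.homogeneous_span _ _ fun F hF => ?_
  obtain ⟨⟨d, hd⟩, -⟩ := hF
  exact ⟨d, (mem_homogeneousSubmodule d F).mpr hd⟩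

lemma pow_isHomogeneous {K σ : Type*} [Field K] {J : Ideal (MvPolynomial σ K)}
    (hJ : J.IsHomogeneous (homogeneousSubmodule σ K)) (m : ℕ) :
    (J ^ m).IsHomogeneous (homogeneousSubmodule σ K) := by
  induction m with
  | zero => intro i x hx; simpa using Ideal.mem_top
  | succ m ih => rw [pow_succ]; exact Ideal.IsHomogeneous.mul ih hJ

lemma symbPow_isHomogeneous {K σ ι : Type*} [Field K] (P : ι → σ → K) (m : ℕ) :
    (symbPow P m).IsHomogeneous (homogeneousSubmodule σ K) :=
  Ideal.IsHomogeneous.iInf fun i => pow_isHomogeneous (homVanishingIdeal_isHomogeneous (P i)) m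

/-- Euler's identity. -/
lemma euler_identity {K : Type*} [CommRing K] {σ : Type*} [Fintype σ] [DecidableEq σ]
    {d : ℕ} {F : MvPolynomial σ K} (hF : F.IsHomogeneous d) :
    ∑ i, X i * pderiv i F = d • F := by
  have key : ∀ u ∈ F.support,
      ∑ i, X i * pderiv i (monomial u (coeff u F)) = d • monomial u (coeff u F) := by
    intro u hu
    have hdeg : u.degree = d := by
      have := hF (mem_support_iff.mp hu)
      exact (DFunLike.congr_fun (Finsupp.degree_eq_weight_one (σ := σ) (R := ℕ)) u).trans this
    have step : ∀ i : σ, X i * pderiv i (monomial u (coeff u F))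
        = (u i) • monomial u (coeff u F) := by
      intro i
      rw [pderiv_monomial]
      by_cases h : u i = 0
      · simp [h]
      · rw [X, monomial_mul, one_mul, add_tsub_cancel_of_le
          (Finsupp.single_le_iff.mpr (Nat.one_le_iff_ne_zero.mpr h)), smul_monomial,
          nsmul_eq_mul, mul_comm]
    rw [Finset.sum_congr rfl fun i _ => step i, ← Finset.sum_smul]
    congr 1
    rw [← hdeg, Finsupp.degree]
    exact (Finset.sum_subset (Finset.subset_univ _)
      (fun i _ hi => Finsupp.notMem_support_iff.mp hi)).symm
  conv_lhs => rw [F.as_sum]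
  simp_rw [map_sum, Finset.mul_sum]
  rw [Finset.sum_comm, Finset.sum_congr rfl key, ← Finset.smul_sum, ← F.as_sum]

/-- In characteristic 0, for the radical ideal `I` of a finite set of
distinct points in `P^N`, `I^{(j+1)} ⊆ M · I^{(j)}` for all `j ≥ 1`. -/
theorem stmt0 {K : Type*} [Field K] [IsAlgClosed K] [CharZero K]
    {N n : ℕ} (hn : 1 ≤ n)
    (P : Fin n → (Fin (N + 1) → K)) (hP : ProjectivelyDistinct P)
    (j : ℕ) (hj : 1 ≤ j) :
    symbPow P (j + 1) ≤ irrel K (Fin (N + 1)) * symbPow P j := by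
  intro F hF
  -- Reduce to homogeneous components
  have hsymb := symbPow_isHomogeneous P (j + 1)
  classical
  rw [← DirectSum.sum_support_decompose (homogeneousSubmodule (Fin (N+1)) K) F]
  refine Ideal.sum_mem _ fun d _ => ?_
  set G : MvPolynomial (Fin (N+1)) K :=
    (DirectSum.decompose (homogeneousSubmodule (Fin (N+1)) K) F d : MvPolynomial (Fin (N+1)) K)
    with hGdef
  have hGmem : G ∈ symbPow P (j + 1) := hsymb d hF
  have hGhom : G.IsHomogeneous d :=
    (mem_homogeneousSubmodule d G).mp (DirectSum.decompose (homogeneousSubmodule (Fin (N+1)) K) F d).2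
  by_cases hG0 : G = 0
  · rw [hG0]; exact Ideal.zero_mem _
  -- d ≥ 1
  have hd1 : 1 ≤ d := by
    by_contra h
    push_neg at h
    interval_cases d
    have hGC := eq_C_of_isHomogeneous_zero hGhom
    have hGirrel : G ∈ irrel K (Fin (N+1)) := by
      have h1 : G ∈ homVanishingIdeal (P ⟨0, hn⟩) ^ (j + 1) := Ideal.mem_iInf.mp hGmem _
      have h2 : homVanishingIdeal (P ⟨0, hn⟩) ^ (j + 1) ≤ homVanishingIdeal (P ⟨0, hn⟩) :=
        Ideal.pow_le_self (Nat.succ_ne_zero j)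
      exact homVanishingIdeal_le_irrel _ (h2 h1)
    rw [irrel, ← Set.image_univ] at hGirrel
    rw [mem_ideal_span_X_image] at hGirrel
    apply hG0
    rw [hGC]
    by_contra hne
    have : coeff 0 G ≠ 0 := fun h => hne (by rw [h, map_zero])
    obtain ⟨i, -, hi⟩ := hGirrel 0 (by
      rw [hGC]; simpa [mem_support_iff, coeff_C] using this)
    simp at hi
  -- partials lie in symbPow P j
  have hpartial : ∀ i, pderiv i G ∈ symbPow P j := by
    intro i
    rw [symbPow, Ideal.mem_iInf]
    intro k
    exact derivation_mem_pow (pderiv i) _ j G (Ideal.mem_iInf.mp hGmem k)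
  -- Euler
  have heuler := euler_identity hGhom
  have hdK : (d : K) ≠ 0 := Nat.cast_ne_zero.mpr (by omega)
  have hGeq : G = (d : K)⁻¹ • ∑ i, X i * pderiv i G := by
    rw [heuler, ← Nat.cast_smul_eq_nsmul K, inv_smul_smul₀ hdK]
  rw [hGeq, smul_eq_C_mul]
  refine Ideal.mul_mem_left _ _ (Ideal.sum_mem _ fun i _ => ?_)
  exact Ideal.mul_mem_mul (X_mem_irrel i) (hpartial i)
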